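/- arXiv:2307.16307 — 2 statements merged into one kernel-verified Lean document; each statement's English description precedes it below -/
import Mathlib

section
/- With W1A2, W1A1, W2A2, W2A1 semantics of the multi-stakeholder query P(ψ₁, ψ₂, A) defined as the intersection of ⟦ψ₁⟧ with the corresponding witness set (W1 or W2) and agreement set (A1 or A2), the following inclusions hold: ⟦P(ψ₁,ψ₂,A)⟧^{W1A2} ⊆ ⟦P(ψ₁,ψ₂,A)⟧^{W1A1}, ⟦P(ψ₁,ψ₂,A)⟧^{W1A2} ⊆ ⟦P(ψ₁,ψ₂,A)⟧^{W2A2}, ⟦P(ψ₁,ψ₂,A)⟧^{W1A1} ⊆ ⟦P(ψ₁,ψ₂,A)⟧^{W2A1}, and ⟦P(ψ₁,ψ₂,A)⟧^{W2A2} ⊆ ⟦P(ψ₁,ψ₂,A)⟧^{W2A1}. -/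
def prec {O α : Type*} (E : O → Set α → O → Prop) (A : Set α) (o o' : O) : Prop :=
  ∃ A', E o A' o' ∧ (A ∩ A').Nonempty

def precPlus {O α : Type*} (E : O → Set α → O → Prop) (A : Set α) : O → O → Prop :=
  Relation.TransGen (prec E A)

def witW1 {O α : Type*} (E : O → Set α → O → Prop) (S₂ : Set O) (A : Set α) : Set O :=
  ⋃ a ∈ A, {o | ∃ o' ∈ S₂, precPlus E {a} o' o}

def witW2 {O α : Type*} (E : O → Set α → O → Prop) (S₂ : Set O) (A : Set α) : Set O :=
  {o | ∃ o' ∈ S₂, precPlus E A o' o}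

def agrA1 {O α : Type*} (E : O → Set α → O → Prop) (S₂ : Set O) (A : Set α) : Set O :=
  ⋂ a ∈ A, {o | ∀ o' ∈ S₂, ¬ precPlus E {a} o o'}

def agrA2 {O α : Type*} (E : O → Set α → O → Prop) (S₂ : Set O) (A : Set α) : Set O :=
  {o | ∀ o' ∈ S₂, ¬ precPlus E A o o'}

lemma precPlus_mono {O α : Type*} (E : O → Set α → O → Prop) {A B : Set α} (h : A ⊆ B) :
    ∀ {o o'}, precPlus E A o o' → precPlus E B o o' := by
  intro o o' hp
  refine Relation.TransGen.mono ?_ _ _ hp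
  rintro x y ⟨A', hE, ⟨a, haA, haA'⟩⟩
  exact ⟨A', hE, a, h haA, haA'⟩

lemma witW1_subset_witW2 {O α : Type*} (E : O → Set α → O → Prop) (S₂ : Set O) (A : Set α) :
    witW1 E S₂ A ⊆ witW2 E S₂ A := by
  intro o ho
  simp only [witW1, Set.mem_iUnion] at ho
  obtain ⟨a, ha, o', hS, hp⟩ := ho
  exact ⟨o', hS, precPlus_mono E (Set.singleton_subset_iff.mpr ha) hp⟩

lemma agrA2_subset_agrA1 {O α : Type*} (E : O → Set α → O → Prop) (S₂ : Set O) (A : Set α) :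
    agrA2 E S₂ A ⊆ agrA1 E S₂ A := by
  intro o ho
  simp only [agrA1, Set.mem_iInter]
  intro a ha o' hS hp
  exact ho o' hS (precPlus_mono E (Set.singleton_subset_iff.mpr ha) hp)

/-- The four collaborative semantics of `P(ψ₁, ψ₂, A)` and their inclusions. -/
theorem collab_semantics_inclusions {O α : Type*} (E : O → Set α → O → Prop)
    (S₁ S₂ : Set O) (A : Set α) :
    (S₁ ∩ witW1 E S₂ A ∩ agrA2 E S₂ A ⊆ S₁ ∩ witW1 E S₂ A ∩ agrA1 E S₂ A) ∧
    (S₁ ∩ witW1 E S₂ A ∩ agrA2 E S₂ A ⊆ S₁ ∩ witW2 E S₂ A ∩ agrA2 E S₂ A) ∧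
    (S₁ ∩ witW1 E S₂ A ∩ agrA1 E S₂ A ⊆ S₁ ∩ witW2 E S₂ A ∩ agrA1 E S₂ A) ∧
    (S₁ ∩ witW2 E S₂ A ∩ agrA2 E S₂ A ⊆ S₁ ∩ witW2 E S₂ A ∩ agrA1 E S₂ A) := by
  refine ⟨?_, ?_, ?_, ?_⟩ <;>
    rintro o ⟨⟨h1, h2⟩, h3⟩
  · exact ⟨⟨h1, h2⟩, agrA2_subset_agrA1 E S₂ A h3⟩
  · exact ⟨⟨h1, witW1_subset_witW2 E S₂ A h2⟩, h3⟩
  · exact ⟨⟨h1, witW1_subset_witW2 E S₂ A h2⟩, h3⟩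
  · exact ⟨⟨h1, h2⟩, agrA2_subset_agrA1 E S₂ A h3⟩
end

section
/- There exists a multi-stakeholder induced preference graph and sets ⟦ψ₁⟧, ⟦ψ₂⟧ of outcomes such that all four collaborative semantics of P(ψ₁, ψ₂, A) are pairwise distinct; in particular the inclusions W1A2 ⊆ W1A1, W1A2 ⊆ W2A2, W1A1 ⊆ W2A1, W2A2 ⊆ W2A1 can all be simultaneously strict. -/
/- auxiliary -/
def E0 (o o' : Fin 8) : Prop := (o = 0 ∧ o' = 1) ∨ (o = 0 ∧ o' = 3) ∨ (o = 3 ∧ o' = 4)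
def E1 (o o' : Fin 8) : Prop := (o = 1 ∧ o' = 2) ∨ (o = 4 ∧ o' = 0)

instance : DecidableRel E0 := fun _ _ => by unfold E0; infer_instance
instance : DecidableRel E1 := fun _ _ => by unfold E1; infer_instance

def Eg : Fin 8 → Set (Fin 2) → Fin 8 → Prop :=
  fun o A' o' => (A' = {0} ∧ E0 o o') ∨ (A' = {1} ∧ E1 o o')

lemma prec0_iff (o o' : Fin 8) : prec Eg ({0} : Set (Fin 2)) o o' ↔ E0 o o' := by
  constructor
  · rintro ⟨A', (⟨rfl, h⟩ | ⟨rfl, h⟩), hne⟩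
    · exact h
    · obtain ⟨x, hx0, hx1⟩ := hne
      simp only [Set.mem_singleton_iff] at hx0 hx1
      subst hx0; exact absurd hx1 (by decide)
  · intro h
    exact ⟨{0}, Or.inl ⟨rfl, h⟩, ⟨0, by simp⟩⟩

lemma prec1_iff (o o' : Fin 8) : prec Eg ({1} : Set (Fin 2)) o o' ↔ E1 o o' := by
  constructor
  · rintro ⟨A', (⟨rfl, h⟩ | ⟨rfl, h⟩), hne⟩
    · obtain ⟨x, hx0, hx1⟩ := hne
      simp only [Set.mem_singleton_iff] at hx0 hx1
      subst hx0; exact absurd hx1 (by decide)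
    · exact h
  · intro h
    exact ⟨{1}, Or.inr ⟨rfl, h⟩, ⟨1, by simp⟩⟩

lemma precU_iff (o o' : Fin 8) : prec Eg (Set.univ : Set (Fin 2)) o o' ↔ E0 o o' ∨ E1 o o' := by
  constructor
  · rintro ⟨A', (⟨rfl, h⟩ | ⟨rfl, h⟩), _⟩
    · exact Or.inl h
    · exact Or.inr h
  · rintro (h | h)
    · exact ⟨{0}, Or.inl ⟨rfl, h⟩, ⟨0, by simp⟩⟩
    · exact ⟨{1}, Or.inr ⟨rfl, h⟩, ⟨1, by simp⟩⟩

lemma transGen_closed {α : Type*} {r : α → α → Prop} {S : α → Prop}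
    (h : ∀ x, S x → ∀ y, r x y → S y) {a b : α} (ha : S a)
    (t : Relation.TransGen r a b) : S b := by
  induction t with
  | single h' => exact h a ha _ h'
  | tail _ h' ih => exact h _ ih _ h'

/- statement theorem below -/
/-- There is a multi-stakeholder induced preference graph on which the four
collaborative semantics of `P(ψ₁, ψ₂, A)` are pairwise distinct; in particular all
four inclusions are simultaneously strict. -/
theorem four_semantics_pairwise_distinct :
    ∃ (E : Fin 8 → Set (Fin 2) → Fin 8 → Prop) (S₁ S₂ : Set (Fin 8)) (A : Set (Fin 2)),
      (S₁ ∩ witW1 E S₂ A ∩ agrA2 E S₂ A ⊂ S₁ ∩ witW1 E S₂ A ∩ agrA1 E S₂ A) ∧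
      (S₁ ∩ witW1 E S₂ A ∩ agrA2 E S₂ A ⊂ S₁ ∩ witW2 E S₂ A ∩ agrA2 E S₂ A) ∧
      (S₁ ∩ witW1 E S₂ A ∩ agrA1 E S₂ A ⊂ S₁ ∩ witW2 E S₂ A ∩ agrA1 E S₂ A) ∧
      (S₁ ∩ witW2 E S₂ A ∩ agrA2 E S₂ A ⊂ S₁ ∩ witW2 E S₂ A ∩ agrA1 E S₂ A) ∧
      (S₁ ∩ witW1 E S₂ A ∩ agrA1 E S₂ A ≠ S₁ ∩ witW2 E S₂ A ∩ agrA2 E S₂ A) := by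
  refine ⟨Eg, {1, 2, 3}, {0}, Set.univ, ?_⟩
  -- general facts
  have hW12 : witW1 Eg {0} Set.univ ⊆ witW2 Eg {0} Set.univ := by
    intro o ho
    simp only [witW1, Set.mem_iUnion, Set.mem_setOf_eq] at ho
    obtain ⟨a, _, o', ho', hp⟩ := ho
    refine ⟨o', ho', Relation.TransGen.mono ?_ _ _ hp⟩
    rintro x y ⟨A', hE, ⟨z, hz1, hz2⟩⟩
    exact ⟨A', hE, ⟨z, Set.mem_univ z, hz2⟩⟩
  have hA21 : agrA2 Eg {0} Set.univ ⊆ agrA1 Eg {0} Set.univ := by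
    intro o ho
    simp only [agrA1, Set.mem_iInter, Set.mem_setOf_eq]
    intro a _ o' ho' hp
    refine ho o' ho' (Relation.TransGen.mono ?_ _ _ hp)
    rintro x y ⟨A', hE, ⟨z, hz1, hz2⟩⟩
    exact ⟨A', hE, ⟨z, Set.mem_univ z, hz2⟩⟩
  -- positive memberships
  have h1W1 : (1 : Fin 8) ∈ witW1 Eg {0} Set.univ := by
    simp only [witW1, Set.mem_iUnion, Set.mem_setOf_eq]
    exact ⟨0, Set.mem_univ _, 0, rfl, Relation.TransGen.single ((prec0_iff 0 1).mpr (by decide))⟩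
  have h3W1 : (3 : Fin 8) ∈ witW1 Eg {0} Set.univ := by
    simp only [witW1, Set.mem_iUnion, Set.mem_setOf_eq]
    exact ⟨0, Set.mem_univ _, 0, rfl, Relation.TransGen.single ((prec0_iff 0 3).mpr (by decide))⟩
  have h2W2 : (2 : Fin 8) ∈ witW2 Eg {0} Set.univ := by
    refine ⟨0, rfl, Relation.TransGen.head ((precU_iff 0 1).mpr (by decide))
      (Relation.TransGen.single ((precU_iff 1 2).mpr (by decide)))⟩
  -- negative memberships
  have h2nW1 : (2 : Fin 8) ∉ witW1 Eg {0} Set.univ := by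
    simp only [witW1, Set.mem_iUnion, Set.mem_setOf_eq]
    rintro ⟨a, -, o', rfl, hp⟩
    fin_cases a
    · have := transGen_closed (r := E0) (S := fun x => x = 0 ∨ x = 1 ∨ x = 3 ∨ x = 4)
        (by decide) (Or.inl rfl) (Relation.TransGen.mono (fun x y h => (prec0_iff x y).mp h) _ _ hp)
      revert this; decide
    · have := transGen_closed (r := E1) (S := fun x => x = 0)
        (by decide) rfl (Relation.TransGen.mono (fun x y h => (prec1_iff x y).mp h) _ _ hp)
      revert this; decide
  have h1A2 : (1 : Fin 8) ∈ agrA2 Eg {0} Set.univ := by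
    rintro o' rfl hp
    have := transGen_closed (r := fun x y => E0 x y ∨ E1 x y)
      (S := fun x => x = 1 ∨ x = 2) (by decide) (Or.inl rfl)
      (Relation.TransGen.mono (fun x y h => (precU_iff x y).mp h) _ _ hp)
    revert this; decide
  have h2A2 : (2 : Fin 8) ∈ agrA2 Eg {0} Set.univ := by
    rintro o' rfl hp
    have := transGen_closed (r := fun x y => E0 x y ∨ E1 x y)
      (S := fun x => x = 2) (by decide) rfl
      (Relation.TransGen.mono (fun x y h => (precU_iff x y).mp h) _ _ hp)
    revert this; decide
  have h3A1 : (3 : Fin 8) ∈ agrA1 Eg {0} Set.univ := by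
    simp only [agrA1, Set.mem_iInter, Set.mem_setOf_eq]
    rintro a - o' rfl hp
    fin_cases a
    · have := transGen_closed (r := E0) (S := fun x => x = 3 ∨ x = 4)
        (by decide) (Or.inl rfl) (Relation.TransGen.mono (fun x y h => (prec0_iff x y).mp h) _ _ hp)
      revert this; decide
    · have := transGen_closed (r := E1) (S := fun x => x = 3)
        (by decide) rfl (Relation.TransGen.mono (fun x y h => (prec1_iff x y).mp h) _ _ hp)
      revert this; decide
  have h3nA2 : (3 : Fin 8) ∉ agrA2 Eg {0} Set.univ := by
    intro h
    exact h 0 rfl (Relation.TransGen.head ((precU_iff 3 4).mpr (by decide))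
      (Relation.TransGen.single ((precU_iff 4 0).mpr (by decide))))
  -- memberships in S₁
  have h1S : (1 : Fin 8) ∈ ({1, 2, 3} : Set (Fin 8)) := by simp
  have h2S : (2 : Fin 8) ∈ ({1, 2, 3} : Set (Fin 8)) := by simp
  have h3S : (3 : Fin 8) ∈ ({1, 2, 3} : Set (Fin 8)) := by simp
  -- key elements
  have m11 : (3 : Fin 8) ∈ ({1,2,3} : Set (Fin 8)) ∩ witW1 Eg {0} Set.univ ∩ agrA1 Eg {0} Set.univ :=
    ⟨⟨h3S, h3W1⟩, h3A1⟩
  have m22 : (2 : Fin 8) ∈ ({1,2,3} : Set (Fin 8)) ∩ witW2 Eg {0} Set.univ ∩ agrA2 Eg {0} Set.univ :=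
    ⟨⟨h2S, h2W2⟩, h2A2⟩
  refine ⟨?_, ?_, ?_, ?_, ?_⟩
  · rw [Set.ssubset_def]
    refine ⟨Set.inter_subset_inter_right _ hA21, fun h => h3nA2 (h m11).2⟩
  · rw [Set.ssubset_def]
    refine ⟨fun x hx => ⟨⟨hx.1.1, hW12 hx.1.2⟩, hx.2⟩, fun h => h2nW1 (h m22).1.2⟩
  · rw [Set.ssubset_def]
    refine ⟨fun x hx => ⟨⟨hx.1.1, hW12 hx.1.2⟩, hx.2⟩,
      fun h => h2nW1 (h ⟨⟨h2S, h2W2⟩, hA21 h2A2⟩).1.2⟩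
  · rw [Set.ssubset_def]
    refine ⟨Set.inter_subset_inter_right _ hA21, fun h => h3nA2 (h ⟨⟨h3S, hW12 h3W1⟩, h3A1⟩).2⟩
  · intro h
    have := h ▸ m11
    exact h3nA2 this.2
end
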